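/- For all ψ ∈ C(ℤₚ, ℂₚ): S(ψ) = (𝟙 − β₁) ⋆ ψ and S⁻¹(ψ) = q ⋆ ψ, where q = Σₙ n!·βₙ; consequently q ⋆ (𝟙 − β₁) = 𝟙, i.e., q is the ⋆-inverse of 𝟙 − β₁. -/

import Mathlib

open Filter Finset

/-- The canonical embedding `ℤ_[p] → K` (where `K` plays the role of `ℂ_p`,
a complete nontrivially normed field extension of `ℚ_[p]`). -/
noncomputable def pc (p : ℕ) [Fact p.Prime] (K : Type*) [NontriviallyNormedField K]
    [NormedAlgebra ℚ_[p] K] (x : ℤ_[p]) : K :=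
  algebraMap ℚ_[p] K x

/-- The operator `S` : `S(f)(x) = f(x) - x·f(x-1)`. -/
noncomputable def Sop (p : ℕ) [Fact p.Prime] (K : Type*) [NontriviallyNormedField K]
    [NormedAlgebra ℚ_[p] K] (f : ℤ_[p] → K) : ℤ_[p] → K :=
  fun x => f x - pc p K x * f (x - 1)

/-- The Mahler basis function `βₙ(x) = C(x,n) = x(x-1)⋯(x-n+1)/n!`, valued in `K`. -/
noncomputable def bK (p : ℕ) [Fact p.Prime] (K : Type*) [NontriviallyNormedField K]
    [NormedAlgebra ℚ_[p] K] (n : ℕ) (x : ℤ_[p]) : K :=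
  (∏ i ∈ Finset.range n, (pc p K x - (i : K))) / (n.factorial : K)

/-- Binomial convolution of Mahler coefficient sequences:
`(a ⋆ b)ₙ = Σ_{k=0}^n C(n,k) aₖ bₙ₋ₖ`. -/
def conv (K : Type*) [NontriviallyNormedField K] (a b : ℕ → K) (n : ℕ) : K :=
  ∑ k ∈ Finset.range (n + 1), (n.choose k : K) * a k * b (n - k)

/-- The Mahler coefficient sequence of `𝟙 - β₁`: `(1, -1, 0, 0, …)`. -/
def uCoeff (K : Type*) [NontriviallyNormedField K] (n : ℕ) : K :=
  if n = 0 then 1 else if n = 1 then -1 else 0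

section Helpers

open PadicInt
open scoped fwdDiff

lemma charZeroK (p : ℕ) [Fact p.Prime] (K : Type*) [NontriviallyNormedField K]
    [NormedAlgebra ℚ_[p] K] : CharZero K :=
  charZero_of_injective_algebraMap (algebraMap ℚ_[p] K).injective

lemma ultraK (p : ℕ) [Fact p.Prime] (K : Type*) [NontriviallyNormedField K]
    [NormedAlgebra ℚ_[p] K] : IsUltrametricDist K := IsUltrametricDist.of_normedAlgebra ℚ_[p]

variable (p : ℕ) [Fact p.Prime] (K : Type*) [NontriviallyNormedField K]
    [NormedAlgebra ℚ_[p] K]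

lemma pc_natCast (m : ℕ) : pc p K (m : ℤ_[p]) = (m : K) := by
  simp [pc]

lemma pc_sub_one (x : ℤ_[p]) : pc p K (x - 1) = pc p K x - 1 := by
  simp [pc]

lemma continuous_pc : Continuous (pc p K) := by
  have h1 : Continuous ((↑) : ℤ_[p] → ℚ_[p]) := continuous_subtype_val
  have h2 : Continuous (algebraMap ℚ_[p] K) := (algebraMapCLM ℚ_[p] K).continuous
  exact h2.comp h1

lemma continuous_bK (n : ℕ) : Continuous (fun x => bK p K n x) := by
  unfold bK
  exact (continuous_finset_prod _ fun i _ => (continuous_pc p K).sub continuous_const).div_const _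

lemma prod_cast_sub (R : Type*) [CommRing R] (m n : ℕ) :
    ∏ i ∈ range n, ((m : R) - (i : R)) = (m.descFactorial n : R) := by
  induction n with
  | zero => simp
  | succ k ih =>
    rw [prod_range_succ, ih, Nat.descFactorial_succ]
    rcases le_or_gt k m with h | h
    · rw [Nat.cast_mul, Nat.cast_sub h]
      ring
    · rw [Nat.descFactorial_eq_zero_iff_lt.mpr h] at ih ⊢
      simp

lemma bK_natCast (n m : ℕ) : bK p K n (m : ℤ_[p]) = (m.choose n : K) := by
  haveI := charZeroK p K
  have h : ((n.factorial : K)) ≠ 0 := Nat.cast_ne_zero.mpr n.factorial_ne_zero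
  rw [bK, pc_natCast, prod_cast_sub, Nat.descFactorial_eq_factorial_mul_choose, Nat.cast_mul]
  field_simp

noncomputable instance algZpK : Algebra ℤ_[p] K :=
  ((algebraMap ℚ_[p] K).comp PadicInt.Coe.ringHom).toAlgebra

lemma norm_algebraMap_Zp (x : ℤ_[p]) : ‖algebraMap ℤ_[p] K x‖ = ‖x‖ := by
  show ‖algebraMap ℚ_[p] K (x : ℚ_[p])‖ = _
  rw [norm_algebraMap', PadicInt.norm_def]

instance boundedSMulZpK : IsBoundedSMul ℤ_[p] K :=
  IsBoundedSMul.of_norm_smul_le fun r x => by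
    rw [Algebra.smul_def, _root_.norm_mul, norm_algebraMap_Zp]

lemma bK_eq_mahler (n : ℕ) (x : ℤ_[p]) : bK p K n x = mahler n x • (1 : K) := by
  have h1 : Continuous (fun x : ℤ_[p] => bK p K n x) := continuous_bK p K n
  have h2 : Continuous (fun x : ℤ_[p] => mahler n x • (1 : K)) :=
    ((mahler n).continuous.smul continuous_const)
  refine congrFun (PadicInt.denseRange_natCast.equalizer h1 h2 (funext fun m => ?_)) x
  show bK p K n (m : ℤ_[p]) = mahler n (m : ℤ_[p]) • (1 : K)
  rw [bK_natCast, mahler_natCast_eq, Algebra.smul_def, mul_one, map_natCast]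

lemma mahler_smul (n : ℕ) (x : ℤ_[p]) (c : K) : mahler n x • c = c * bK p K n x := by
  rw [bK_eq_mahler, Algebra.smul_def, Algebra.smul_def, mul_one, mul_comm]

lemma norm_bK_le (n : ℕ) (x : ℤ_[p]) : ‖bK p K n x‖ ≤ 1 := by
  rw [bK_eq_mahler, Algebra.smul_def, mul_one, norm_algebraMap_Zp]
  exact PadicInt.norm_le_one _

lemma summable_bK (c : ℕ → K) [CompleteSpace K] (hc : Tendsto c atTop (nhds 0)) (x : ℤ_[p]) :
    Summable (fun n => c n * bK p K n x) := by
  haveI := ultraK p K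
  apply NonarchimedeanAddGroup.summable_of_tendsto_cofinite_zero
  rw [Nat.cofinite_eq_atTop]
  refine squeeze_zero_norm (fun n => ?_) (tendsto_zero_iff_norm_tendsto_zero.mp hc)
  rw [_root_.norm_mul]
  exact mul_le_of_le_one_right (norm_nonneg _) (norm_bK_le p K n x)

lemma tsum_bK_eq_mahlerSeries (c : ℕ → K) [CompleteSpace K] (hc : Tendsto c atTop (nhds 0))
    (x : ℤ_[p]) : ∑' n, c n * bK p K n x = mahlerSeries c x := by
  haveI := ultraK p K
  rw [PadicInt.mahlerSeries_apply hc]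
  exact tsum_congr fun n => (mahler_smul p K n x (c n)).symm

lemma coeff_ext (c d : ℕ → K) [CompleteSpace K] (hc : Tendsto c atTop (nhds 0))
    (hd : Tendsto d atTop (nhds 0))
    (h : ∀ x, (∑' n, c n * bK p K n x) = ∑' n, d n * bK p K n x) : c = d := by
  haveI := ultraK p K
  have hs : (PadicInt.mahlerSeries (p := p) c : C(ℤ_[p], K)) = PadicInt.mahlerSeries (p := p) d := by
    ext x
    rw [← tsum_bK_eq_mahlerSeries p K c hc x, ← tsum_bK_eq_mahlerSeries p K d hd x, h x]
  funext n
  rw [← PadicInt.fwdDiff_mahlerSeries (p := p) hc n, ← PadicInt.fwdDiff_mahlerSeries (p := p) hd n, hs]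

lemma pc_mul_bK (n : ℕ) (x : ℤ_[p]) :
    pc p K x * bK p K n (x - 1) = ((n + 1 : ℕ) : K) * bK p K (n + 1) x := by
  haveI := charZeroK p K
  rw [bK, bK, pc_sub_one]
  have h1 : ∏ i ∈ range n, (pc p K x - 1 - (i : K)) =
      ∏ i ∈ range n, (pc p K x - ((i + 1 : ℕ) : K)) := by
    refine prod_congr rfl fun i _ => ?_
    push_cast
    ring
  rw [h1]
  have h2 : ∏ i ∈ range (n + 1), (pc p K x - (i : K)) =
      (∏ i ∈ range n, (pc p K x - ((i + 1 : ℕ) : K))) * pc p K x := by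
    rw [prod_range_succ']
    simp
  have hn : ((n.factorial : K)) ≠ 0 := Nat.cast_ne_zero.mpr n.factorial_ne_zero
  have hn1 : (((n + 1).factorial : K)) ≠ 0 := Nat.cast_ne_zero.mpr (n + 1).factorial_ne_zero
  rw [h2]
  rw [Nat.factorial_succ] at hn1 ⊢
  push_cast at hn1 ⊢
  field_simp

lemma conv_zero (a c : ℕ → K) : conv K a c 0 = a 0 * c 0 := by
  simp [conv]

lemma conv_uCoeff_succ (c : ℕ → K) (n : ℕ) :
    conv K (uCoeff K) c (n + 1) = c (n + 1) - ((n + 1 : ℕ) : K) * c n := by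
  rw [conv, sum_range_succ', sum_range_succ']
  have hz : ∀ k ∈ range n,
      ((n + 1).choose (k + 1 + 1) : K) * uCoeff K (k + 1 + 1) * c (n + 1 - (k + 1 + 1)) = 0 := by
    intro k _
    simp [uCoeff]
  rw [sum_congr rfl hz, sum_const_zero, zero_add]
  simp only [uCoeff, Nat.choose_one_right, Nat.choose_zero_right]
  norm_num
  ring

lemma conv_fact_succ (c : ℕ → K) (n : ℕ) :
    conv K (fun m => (m.factorial : K)) c (n + 1)
      = ((n + 1 : ℕ) : K) * conv K (fun m => (m.factorial : K)) c n + c (n + 1) := by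
  rw [conv, sum_range_succ']
  have hterm : ∀ k, ((n + 1).choose (k + 1) : K) * ((k + 1).factorial : K) * c (n + 1 - (k + 1))
      = ((n + 1 : ℕ) : K) * ((n.choose k : K) * (k.factorial : K) * c (n - k)) := by
    intro k
    have hnat : (n + 1).choose (k + 1) * (k + 1).factorial = (n + 1) * (n.choose k * k.factorial) := by
      have h := Nat.add_one_mul_choose_eq n k
      calc (n + 1).choose (k + 1) * (k + 1).factorial
          = ((n + 1).choose (k + 1) * (k + 1)) * k.factorial := by
            rw [Nat.factorial_succ]; ring
        _ = ((n + 1) * n.choose k) * k.factorial := by rw [← h]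
        _ = (n + 1) * (n.choose k * k.factorial) := by ring
    have hK : ((n + 1).choose (k + 1) : K) * ((k + 1).factorial : K)
        = ((n + 1 : ℕ) : K) * ((n.choose k : K) * (k.factorial : K)) := by
      exact_mod_cast congrArg (Nat.cast : ℕ → K) hnat
    have hsub : n + 1 - (k + 1) = n - k := by omega
    rw [hsub]
    calc ((n + 1).choose (k + 1) : K) * ((k + 1).factorial : K) * c (n - k)
        = (((n + 1).choose (k + 1) : K) * ((k + 1).factorial : K)) * c (n - k) := by ring
      _ = (((n + 1 : ℕ) : K) * ((n.choose k : K) * (k.factorial : K))) * c (n - k) := by rw [hK]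
      _ = ((n + 1 : ℕ) : K) * ((n.choose k : K) * (k.factorial : K) * c (n - k)) := by ring
  rw [sum_congr rfl fun k _ => hterm k, ← mul_sum]
  simp [conv]

include p in
lemma tendsto_conv_uCoeff (c : ℕ → K) (hc : Tendsto c atTop (nhds 0)) :
    Tendsto (conv K (uCoeff K) c) atTop (nhds 0) := by
  rw [← tendsto_add_atTop_iff_nat 1]
  have h1 : Tendsto (fun n => c (n + 1)) atTop (nhds 0) :=
    hc.comp (tendsto_add_atTop_nat 1)
  have h2 : Tendsto (fun n => ((n + 1 : ℕ) : K) * c n) atTop (nhds 0) := by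
    haveI := ultraK p K
    refine squeeze_zero_norm (fun n => ?_) (tendsto_zero_iff_norm_tendsto_zero.mp hc)
    rw [_root_.norm_mul]
    exact mul_le_of_le_one_left (norm_nonneg _) (IsUltrametricDist.norm_natCast_le_one K _)
  have := h1.sub h2
  rw [sub_zero] at this
  refine this.congr fun n => ?_
  rw [conv_uCoeff_succ]

/-- The auxiliary shifted sequence `d 0 = 0`, `d (n+1) = (n+1) * c n`. -/
def dseq (c : ℕ → K) : ℕ → K := fun n => Nat.rec 0 (fun m _ => ((m + 1 : ℕ) : K) * c m) n

lemma dseq_zero (c : ℕ → K) : dseq K c 0 = 0 := rfl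

lemma dseq_succ (c : ℕ → K) (n : ℕ) : dseq K c (n + 1) = ((n + 1 : ℕ) : K) * c n := rfl

include p in
lemma tendsto_dseq (c : ℕ → K) (hc : Tendsto c atTop (nhds 0)) :
    Tendsto (dseq K c) atTop (nhds 0) := by
  haveI := ultraK p K
  rw [← tendsto_add_atTop_iff_nat 1]
  refine squeeze_zero_norm (fun n => ?_) (tendsto_zero_iff_norm_tendsto_zero.mp hc)
  rw [dseq_succ, _root_.norm_mul]
  exact mul_le_of_le_one_left (norm_nonneg _) (IsUltrametricDist.norm_natCast_le_one K _)

lemma conv_uCoeff_eq_sub_dseq (c : ℕ → K) (n : ℕ) :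
    conv K (uCoeff K) c n = c n - dseq K c n := by
  cases n with
  | zero => rw [conv_zero, dseq_zero]; simp [uCoeff]
  | succ m => rw [conv_uCoeff_succ, dseq_succ]

lemma Sop_eq (c : ℕ → K) [CompleteSpace K] (hc : Tendsto c atTop (nhds 0)) (g : ℤ_[p] → K)
    (hg : ∀ x, g x = ∑' n, c n * bK p K n x) (x : ℤ_[p]) :
    Sop p K g x = ∑' n, conv K (uCoeff K) c n * bK p K n x := by
  have hd : Tendsto (dseq K c) atTop (nhds 0) := tendsto_dseq p K c hc
  have hsum_c : Summable (fun n => c n * bK p K n x) := summable_bK p K c hc x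
  have hsum_d : Summable (fun n => dseq K c n * bK p K n x) := summable_bK p K (dseq K c) hd x
  have key : pc p K x * g (x - 1) = ∑' n, dseq K c n * bK p K n x := by
    rw [hg (x - 1), ← tsum_mul_left]
    have h1 : ∀ n, pc p K x * (c n * bK p K n (x - 1)) = dseq K c (n + 1) * bK p K (n + 1) x := by
      intro n
      rw [dseq_succ, mul_assoc]
      rw [show pc p K x * (c n * bK p K n (x - 1)) = c n * (pc p K x * bK p K n (x - 1)) by ring,
        pc_mul_bK]
      ring
    rw [tsum_congr h1, hsum_d.tsum_eq_zero_add, dseq_zero, zero_mul, zero_add]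
  rw [Sop, hg x, key, ← hsum_c.tsum_sub hsum_d]
  exact tsum_congr fun n => by rw [conv_uCoeff_eq_sub_dseq, sub_mul]

lemma conv_fact_uCoeff_eq :
    conv K (fun m => (m.factorial : K)) (uCoeff K) = fun n => if n = 0 then 1 else 0 := by
  funext n
  cases n with
  | zero => simp [conv, uCoeff]
  | succ m =>
    rw [conv, sum_range_succ, sum_range_succ]
    have hz : ∀ k ∈ range m,
        ((m + 1).choose k : K) * (k.factorial : K) * uCoeff K (m + 1 - k) = 0 := by
      intro k hk
      rw [mem_range] at hk
      have h1 : m + 1 - k ≠ 0 := by omega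
      have h2 : m + 1 - k ≠ 1 := by omega
      simp [uCoeff, h1, h2]
    rw [sum_congr rfl hz, sum_const_zero, zero_add]
    have hu1 : uCoeff K (m + 1 - m) = -1 := by
      rw [show m + 1 - m = 1 from by omega]; simp [uCoeff]
    have hu0 : uCoeff K (m + 1 - (m + 1)) = 1 := by
      rw [show m + 1 - (m + 1) = 0 from by omega]; simp [uCoeff]
    rw [hu1, hu0, Nat.choose_succ_self_right, Nat.choose_self, Nat.factorial_succ,
      if_neg (Nat.succ_ne_zero m)]
    push_cast
    ring

end Helpers

/-- For all continuous `ψ : ℤ_[p] → K` with Mahler coefficients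
`b`: `S ψ = (𝟙 - β₁) ⋆ ψ` and `S⁻¹ ψ = q ⋆ ψ`, where `q = Σₙ n!·βₙ` has Mahler
coefficients `(n!)ₙ`; consequently `q ⋆ (𝟙 - β₁) = 𝟙` (on Mahler coefficients),
i.e. `q` is the `⋆`-inverse of `𝟙 - β₁`. -/
theorem stmt_18 (p : ℕ) [Fact p.Prime] (K : Type*) [NontriviallyNormedField K]
    [NormedAlgebra ℚ_[p] K] [CompleteSpace K]
    (ψ : ℤ_[p] → K) (hψ : Continuous ψ)
    (b : ℕ → K) (hb : Tendsto b atTop (nhds 0))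
    (hψm : ∀ x, ψ x = ∑' n : ℕ, b n * bK p K n x) :
    (∀ x, Sop p K ψ x = ∑' n : ℕ, conv K (uCoeff K) b n * bK p K n x) ∧
    (∀ f : ℤ_[p] → K, Continuous f → Sop p K f = ψ →
      ∀ x, f x = ∑' n : ℕ, conv K (fun m => (m.factorial : K)) b n * bK p K n x) ∧
    conv K (fun m => (m.factorial : K)) (uCoeff K)
      = fun n => if n = 0 then 1 else 0 := by
  haveI := ultraK p K
  refine ⟨fun x => Sop_eq p K b hb ψ hψm x, ?_, conv_fact_uCoeff_eq K⟩
  intro f hf hSf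
  set F : C(ℤ_[p], K) := ⟨f, hf⟩ with hF
  set a : ℕ → K := fun n => (fwdDiff (1 : ℤ_[p]))^[n] (⇑F) 0 with ha_def
  have ha : Tendsto a atTop (nhds 0) := PadicInt.fwdDiff_tendsto_zero F
  have hfa : ∀ x, f x = ∑' n, a n * bK p K n x := by
    intro x
    have h1 : (PadicInt.mahlerSeries (p := p) a : C(ℤ_[p], K)) = F := (PadicInt.hasSum_mahler F).tsum_eq
    rw [tsum_bK_eq_mahlerSeries p K a ha x, h1]
    rfl
  have hcoef : conv K (uCoeff K) a = b := by
    refine coeff_ext p K _ _ (tendsto_conv_uCoeff p K a ha) hb fun x => ?_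
    rw [← Sop_eq p K a ha f hfa x, hSf, hψm x]
  have key : ∀ n, a n = conv K (fun m => (m.factorial : K)) b n := by
    intro n
    induction n with
    | zero =>
      have h0 := congrFun hcoef 0
      rw [conv_zero] at h0
      simp only [uCoeff, if_pos rfl, one_mul] at h0
      rw [conv_zero]
      simp [← h0]
    | succ m ih =>
      have h1 := congrFun hcoef (m + 1)
      rw [conv_uCoeff_succ] at h1
      rw [conv_fact_succ, ← ih]
      linear_combination h1
  intro x
  rw [hfa x]
  exact tsum_congr fun n => by rw [key n]
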